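/- Let k be a field, G a finite group, and β a normalized 3-cocycle on G with values in kˣ. The k-linear map S : D^β(k[G]) → D^β(k[G]) defined on basis elements by S(⟨g,x⟩) = (θ_{g⁻¹}(x,x⁻¹) · γ_x(g,g⁻¹))⁻¹ · ⟨x⁻¹g⁻¹x, x⁻¹⟩ is a unital algebra anti-homomorphism: S(a·b) = S(b)·S(a) for all a,b ∈ D^β(k[G]) and S maps the identity to the identity. -/

import Mathlib

open scoped BigOperators TensorProduct

namespace StringyOrbifold

/-- A normalized 3-cocycle on `G` with values in `kˣ`. -/
def IsNormalized3Cocycle {k G : Type*} [Field k] [Group G] (β : G → G → G → kˣ) : Prop :=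
  (∀ g h l m : G, β g h l * β g (h * l) m * β h l m = β (g * h) l m * β g h (l * m)) ∧
  (∀ g h : G, β 1 g h = 1 ∧ β g 1 h = 1 ∧ β g h 1 = 1)

/-- A normalized 2-cocycle on `G` with values in `kˣ`. -/
def IsNormalized2Cocycle {k G : Type*} [Field k] [Group G] (α : G → G → kˣ) : Prop :=
  (∀ g h l : G, α g h * α (g * h) l = α h l * α g (h * l)) ∧
  (∀ g : G, α g 1 = 1 ∧ α 1 g = 1)

/-- `θ_g(x,y) = β(g,x,y)·β(x,y,(xy)⁻¹g(xy)) / β(x,x⁻¹gx,y)`. -/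
def ddTheta {k G : Type*} [Field k] [Group G] (β : G → G → G → kˣ) (g x y : G) : kˣ :=
  β g x y * β x y ((x * y)⁻¹ * g * (x * y)) / β x (x⁻¹ * g * x) y

/-- `γ_x(g₁,g₂) = β(g₁,g₂,x)·β(x,x⁻¹g₁x,x⁻¹g₂x) / β(g₁,x,x⁻¹g₂x)`. -/
def ddGamma {k G : Type*} [Field k] [Group G] (β : G → G → G → kˣ) (x g1 g2 : G) : kˣ :=
  β g1 g2 x * β x (x⁻¹ * g1 * x) (x⁻¹ * g2 * x) / β g1 x (x⁻¹ * g2 * x)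

/-- The trivial 3-cocycle. -/
def trivCocycle (k G : Type*) [Field k] [Group G] : G → G → G → kˣ := fun _ _ _ => 1

/-- The underlying `k`-vector space of the twisted Drinfel'd double `D^β(k[G])`:
the free `k`-module on the basis `⟨g,x⟩`, `(g,x) ∈ G × G`, realized as functions. -/
abbrev DD (k G : Type*) := G × G → k

/-- The function model for `D^β(k[G]) ⊗ D^β(k[G])`. -/
abbrev DD2 (k G : Type*) := (G × G) × (G × G) → k

/-- The function model for the threefold tensor power of `D^β(k[G])`. -/
abbrev DD3 (k G : Type*) := (G × G) × (G × G) × (G × G) → k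

/-- The basis element `⟨g,x⟩` of `D^β(k[G])`. -/
def ddBasis {k G : Type*} [Field k] [DecidableEq G] (g x : G) : DD k G :=
  fun p => if p = (g, x) then 1 else 0

/-- The multiplication of `D^β(k[G])`, the bilinear extension of
`⟨g,x⟩·⟨h,y⟩ = δ_{g,xhx⁻¹} θ_g(x,y) ⟨g,xy⟩`. -/
def ddMul {k G : Type*} [Field k] [Group G] [Fintype G]
    (β : G → G → G → kˣ) (a b : DD k G) : DD k G :=
  fun p => ∑ x : G, a (p.1, x) * b (x⁻¹ * p.1 * x, x⁻¹ * p.2) * (ddTheta β p.1 x (x⁻¹ * p.2) : k)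

/-- The identity `Σ_{h∈G} ⟨h,e⟩` of `D^β(k[G])`. -/
def ddOne (k G : Type*) [Field k] [Group G] [Fintype G] [DecidableEq G] : DD k G :=
  ∑ g : G, ddBasis g 1

/-- The elementary tensor `a ⊗ b` in the function model of `D^β(k[G]) ⊗ D^β(k[G])`. -/
def ddTensor {k G : Type*} [Field k] (a b : DD k G) : DD2 k G :=
  fun p => a p.1 * b p.2

/-- The elementary tensor `a ⊗ b ⊗ c` in the function model of the triple tensor power. -/
def ddTensor3 {k G : Type*} [Field k] (a b c : DD k G) : DD3 k G :=
  fun p => a p.1 * b p.2.1 * c p.2.2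

/-- Componentwise multiplication on `D^β(k[G]) ⊗ D^{β'}(k[G])` in the function model. -/
def dd2Mul {k G : Type*} [Field k] [Group G] [Fintype G]
    (β β' : G → G → G → kˣ) (a b : DD2 k G) : DD2 k G :=
  fun p => ∑ x : G, ∑ y : G,
    a ((p.1.1, x), (p.2.1, y)) *
      b ((x⁻¹ * p.1.1 * x, x⁻¹ * p.1.2), (y⁻¹ * p.2.1 * y, y⁻¹ * p.2.2)) *
      (ddTheta β p.1.1 x (x⁻¹ * p.1.2) : k) * (ddTheta β' p.2.1 y (y⁻¹ * p.2.2) : k)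

/-- Componentwise multiplication on the threefold tensor power of `D^β(k[G])`. -/
def dd3Mul {k G : Type*} [Field k] [Group G] [Fintype G]
    (β : G → G → G → kˣ) (a b : DD3 k G) : DD3 k G :=
  fun p => ∑ x : G, ∑ y : G, ∑ z : G,
    a ((p.1.1, x), (p.2.1.1, y), (p.2.2.1, z)) *
      b ((x⁻¹ * p.1.1 * x, x⁻¹ * p.1.2), (y⁻¹ * p.2.1.1 * y, y⁻¹ * p.2.1.2),
        (z⁻¹ * p.2.2.1 * z, z⁻¹ * p.2.2.2)) *
      (ddTheta β p.1.1 x (x⁻¹ * p.1.2) : k) * (ddTheta β p.2.1.1 y (y⁻¹ * p.2.1.2) : k) *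
      (ddTheta β p.2.2.1 z (z⁻¹ * p.2.2.2) : k)

/-- The comultiplication of `D^β(k[G])`: the linear extension of
`Δ(⟨g,x⟩) = Σ_{g₁g₂=g} γ_x(g₁,g₂) ⟨g₁,x⟩ ⊗ ⟨g₂,x⟩`. -/
def ddComul {k G : Type*} [Field k] [Group G] [DecidableEq G]
    (β : G → G → G → kˣ) (a : DD k G) : DD2 k G :=
  fun p =>
    if p.1.2 = p.2.2 then (ddGamma β p.1.2 p.1.1 p.2.1 : k) * a (p.1.1 * p.2.1, p.1.2) else 0

/-- The map `id ⊗ Δ` from `D^β(k[G])^{⊗2}` to `D^β(k[G])^{⊗3}` in the function model. -/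
def idTensorComul {k G : Type*} [Field k] [Group G] [DecidableEq G]
    (β : G → G → G → kˣ) (u : DD2 k G) : DD3 k G :=
  fun p => if p.2.1.2 = p.2.2.2 then
      (ddGamma β p.2.1.2 p.2.1.1 p.2.2.1 : k) * u (p.1, (p.2.1.1 * p.2.2.1, p.2.1.2))
    else 0

/-- The map `Δ ⊗ id` from `D^β(k[G])^{⊗2}` to `D^β(k[G])^{⊗3}` in the function model. -/
def comulTensorId {k G : Type*} [Field k] [Group G] [DecidableEq G]
    (β : G → G → G → kˣ) (u : DD2 k G) : DD3 k G :=
  fun p => if p.1.2 = p.2.1.2 then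
      (ddGamma β p.1.2 p.1.1 p.2.1.1 : k) * u ((p.1.1 * p.2.1.1, p.1.2), p.2.2)
    else 0

/-- The flip of the two tensor factors. -/
def ddSwap {k G : Type*} (u : DD2 k G) : DD2 k G := fun p => u (p.2, p.1)

/-- The counit `ε(⟨g,x⟩) = δ_{g,e}` of `D^β(k[G])`. -/
def ddCounit {k G : Type*} [Field k] [Group G] [Fintype G] (a : DD k G) : k :=
  ∑ x : G, a (1, x)

/-- The injection `k[G]^* → D^β(k[G])`, `δ_g ↦ ⟨g,e⟩`. -/
def ddIota {k G : Type*} [Field k] [Group G] [DecidableEq G] (f : G → k) : DD k G :=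
  fun p => if p.2 = 1 then f p.1 else 0

/-- The diagonal map `D^{ββ'}(k[G]) → D^β(k[G]) ⊗ D^{β'}(k[G])`, `⟨g,x⟩ ↦ ⟨g,x⟩ ⊗ ⟨g,x⟩`. -/
def ddDiag {k G : Type*} [Field k] [DecidableEq G] (a : DD k G) : DD2 k G :=
  fun p => if p.1 = p.2 then a p.1 else 0

/-- The antipode of `D^β(k[G])`: the linear extension of
`S(⟨g,x⟩) = (θ_{g⁻¹}(x,x⁻¹)·γ_x(g,g⁻¹))⁻¹ ⟨x⁻¹g⁻¹x, x⁻¹⟩`. -/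
def ddAntipode {k G : Type*} [Field k] [Group G] (β : G → G → G → kˣ) (a : DD k G) : DD k G :=
  fun p =>
    (((ddTheta β (p.2⁻¹ * p.1 * p.2) p.2⁻¹ p.2 *
        ddGamma β p.2⁻¹ (p.2⁻¹ * p.1⁻¹ * p.2) (p.2⁻¹ * p.1 * p.2))⁻¹ : kˣ) : k) *
      a (p.2⁻¹ * p.1⁻¹ * p.2, p.2⁻¹)

/-- The antipode of the untwisted double `D(k[G])`: `S(⟨g,x⟩) = ⟨x⁻¹g⁻¹x, x⁻¹⟩`. -/
def ddAntipode0 {k G : Type*} [Field k] [Group G] (a : DD k G) : DD k G :=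
  fun p => a (p.2⁻¹ * p.1⁻¹ * p.2, p.2⁻¹)

/-- The operator `φ(x)` on `D^β(k[G])^{comm}`: the linear extension of
`φ(x)(⟨h,y⟩) = (θ_{xhx⁻¹}(x,y)/θ_{xhx⁻¹}(xyx⁻¹,x))·⟨xhx⁻¹, xyx⁻¹⟩`. -/
def ddPhi {k G : Type*} [Field k] [Group G] (β : G → G → G → kˣ) (x : G) (a : DD k G) :
    DD k G :=
  fun p => ((ddTheta β p.1 x (x⁻¹ * p.2 * x) / ddTheta β p.1 p.2 x : kˣ) : k) *
    a (x⁻¹ * p.1 * x, x⁻¹ * p.2 * x)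

/-- The span of the basis elements `⟨g,x⟩` with `gx = xg`, i.e. `D^β(k[G])^{comm}`. -/
def ddCommSpan (k G : Type*) [Field k] [Group G] [DecidableEq G] : Submodule k (DD k G) :=
  Submodule.span k {v : DD k G | ∃ g x : G, g * x = x * g ∧ v = ddBasis g x}

/-- The underlying space of the twisted group ring `k^α[G]`. -/
abbrev TG (k G : Type*) := G → k

/-- The basis element `1_g` of `k^α[G]`. -/
def tgBasis {k G : Type*} [Field k] [DecidableEq G] (g : G) : TG k G :=
  fun z => if z = g then 1 else 0

/-- The multiplication `1_g·1_h = α(g,h) 1_{gh}` of the twisted group ring `k^α[G]`. -/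
def tgMul {k G : Type*} [Field k] [Group G] [Fintype G] (α : G → G → kˣ) (a b : TG k G) :
    TG k G :=
  fun z => ∑ x : G, a x * b (x⁻¹ * z) * (α x (x⁻¹ * z) : k)

/-- The identity `1_e` of `k^α[G]`. -/
def tgOne (k G : Type*) [Field k] [Group G] [DecidableEq G] : TG k G := tgBasis 1

/-- The inverse `α(g,g⁻¹)⁻¹·1_{g⁻¹}` of the basis element `1_g` in `k^α[G]`. -/
def tgInvBasis {k G : Type*} [Field k] [Group G] [DecidableEq G] (α : G → G → kˣ) (g : G) :
    TG k G :=
  (((α g g⁻¹)⁻¹ : kˣ) : k) • tgBasis g⁻¹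

/-- Conjugation `ρ(g)(a) = 1_g · a · (1_g)⁻¹` in the twisted group ring `k^α[G]`. -/
def tgConj {k G : Type*} [Field k] [Group G] [Fintype G] [DecidableEq G]
    (α : G → G → kˣ) (g : G) (a : TG k G) : TG k G :=
  tgMul α (tgBasis g) (tgMul α a (tgInvBasis α g))

theorem comm_inv_left {G : Type*} [Group G] {g x : G} (h : x * g = g * x) :
    x⁻¹ * g = g * x⁻¹ := by
  rw [eq_mul_inv_iff_mul_eq, mul_assoc, ← h, ← mul_assoc, inv_mul_cancel, one_mul]

theorem comm_inv_mul {G : Type*} [Group G] {g x z : G} (hx : x * g = g * x)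
    (hz : z * g = g * z) : (x⁻¹ * z) * g = g * (x⁻¹ * z) := by
  rw [mul_assoc, hz, ← mul_assoc, comm_inv_left hx, mul_assoc]

/-- The index set `{(g,x) : x ∈ Z(g)}` of the direct sum `⊕_g k^{θ_g}[Z(g)]`. -/
abbrev CentPairs (G : Type*) [Group G] := Σ g : G, {x : G // x * g = g * x}

/-- The underlying space of `⊕_g k^{θ_g}[Z(g)]`. -/
abbrev TY (k G : Type*) [Group G] := CentPairs G → k

/-- The multiplication of `⊕_g k^{θ_g}[Z(g)]`: in the `g`-th summand,
`1_x·1_y = θ_g(x,y)·1_{xy}` for `x, y ∈ Z(g)`, and distinct summands multiply to `0`. -/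
def tyMul {k G : Type*} [Field k] [Group G] [Fintype G] [DecidableEq G]
    (β : G → G → G → kˣ) (a b : TY k G) : TY k G :=
  fun q => ∑ x : {x : G // x * q.1 = q.1 * x},
    a ⟨q.1, x⟩ * b ⟨q.1, ⟨(x : G)⁻¹ * (q.2 : G), comm_inv_mul x.2 q.2.2⟩⟩ *
      (ddTheta β q.1 (x : G) ((x : G)⁻¹ * (q.2 : G)) : k)

/-- The identity of `⊕_g k^{θ_g}[Z(g)]`. -/
def tyOne (k G : Type*) [Field k] [Group G] [DecidableEq G] : TY k G :=
  fun q => if (q.2 : G) = 1 then 1 else 0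

/-- The map `⊕_g k^{θ_g}[Z(g)] → D^β(k[G])` sending `1_x` in the `g`-th summand
to `⟨g,x⟩`. -/
def tyMap {k G : Type*} [Field k] [Group G] [DecidableEq G] (f : TY k G) : DD k G :=
  fun p => if h : p.2 * p.1 = p.1 * p.2 then f ⟨p.1, ⟨p.2, h⟩⟩ else 0

/-- The action of `D^{ββ'}(k[G])` on `A ⊗ B`, assigning to `⟨g,x⟩` the endomorphism
`ρ_A(⟨g,x⟩) ⊗ ρ_B(⟨g,x⟩)` and extending linearly. -/
noncomputable def ddTensorAction {k G A B : Type*} [Field k] [Group G] [Fintype G]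
    [DecidableEq G] [AddCommGroup A] [Module k A] [AddCommGroup B] [Module k B]
    (ρA : DD k G → (A →ₗ[k] A)) (ρB : DD k G → (B →ₗ[k] B)) (a : DD k G) :
    (A ⊗[k] B) →ₗ[k] (A ⊗[k] B) :=
  ∑ p : G × G, a p • TensorProduct.map (ρA (ddBasis p.1 p.2)) (ρB (ddBasis p.1 p.2))

set_option maxHeartbeats 1000000 in
private theorem key_abstract {k : Type*} [Field k]
    {B0 B1 B2 B3 B4 B5 B6 B7 B8 B9 B10 B11 B12 B13 B14 B15 B16 B17 B18 B19 B20 B21 B22 B23 B24 B25 B26 B27 B28 B29 B30 B31 B32 B33 B34 B35 B36 B37 B38 B39 B40 B41 B42 B43 B44 B45 B46 B47 B48 B49 B50 B51 B52 B53 B54 B55 B56 B57 B58 B59 B60 B61 B62 B63 B64 B65 B66 B67 B68 B69 B70 B71 B72 B73 B74 B75 B76 B77 B78 B79 B80 B81 B82 B83 B84 B85 B86 B87 B88 B89 B90 B91 B92 B93 B94 B95 B96 B97 B98 B99 B100 B101 B102 B103 B104 B105 B106 B107 B108 B109 B110 B111 B112 B113 B114 B115 B116 B117 : k}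
    (h0 : B63 * (B69 * B48) = B78 * B61)
    (h1 : B63 * (B68 * B47) = B77 * B62)
    (h2 : B67 * (B64 * B51) = B80)
    (h3 : B60 * (B56 * B46) = B76 * B61)
    (h4 : B28 * (B40 * B19) = B48 * B26)
    (h5 : B28 * (B39 * B18) = B47 * B27)
    (h6 : B34 * (B30 * B87) = B51)
    (h7 : B25 * (B20 * B17) = B46 * B26)
    (h8 : B12 * (B4 * B108) = B19 * B10)
    (h9 : B12 * (B3 * B107) = B18 * B11)
    (h10 : B23 * (B35 * B14) = B43 * B22)
    (h11 : B84 * B106 = B87)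
    (h12 : B9 * B105 = B17 * B10)
    (h13 : B101 * (B96 * B117) = B108 * B99)
    (h14 : B101 * (B95 * B116) = B107 * B100)
    (h15 : B7 * (B2 * B93) = B14 * B6)
    (h16 : B55 * (B70 * B41) = B73 * B54)
    (h17 : B98 * (B92 * B115) = B106)
    (h18 : B98 * (B88 * B114) = B105 * B99)
    (h19 : B59 * (B58 * B45) = B75 * B62)
    (h20 : B66 * (B65 * B50) = B79)
    (h21 : B59 * (B57 * B44) = B74 * B60)
    (h22 : B24 * (B23 * B16) = B45 * B27)
    (h23 : B33 * (B32 * B86) = B50)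
    (h24 : B24 * (B21 * B15) = B44 * B25)
    (h25 : B8 * (B7 * B103) = B16 * B11)
    (h26 : B83 * (B82 * B104) = B86)
    (h27 : B31 * (B29 * B85) = B49)
    (h28 : B21 * (B20 * B13) = B42 * B22)
    (h29 : B8 * (B5 * B102) = B15 * B9)
    (h30 : B97 * B111 = B103 * B100)
    (h31 : B53 * (B64 * B30) = B72 * B54)
    (h32 : B97 * B113 = B104)
    (h33 : B97 * B109 = B102 * B98)
    (h34 : B81 * B91 = B85)
    (h35 : B52 * (B56 * B20) = B71)
    (h36 : B5 * B88 = B13 * B6)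
    (h37 : B112 * (B117 * B67) = B110)
    (h38 : B112 * (B116 * B66) = B111)
    (h39 : B90 * (B96 * B34) = B88)
    (h40 : B90 * (B95 * B33) = B89)
    (h41 : B1 * (B4 * B84) = 1)
    (h42 : B89 * (B94 * B32) = B90)
    (h43 : B89 * (B93 * B31) = B88)
    (h44 : B1 * (B3 * B83) = B0)
    (h45 : B38 * (B41 * B101) = B37)
    (h46 : B109 * (B115 * B55) = B113)
    (h47 : B38 * (B40 * B98) = B35)
    (h48 : B109 * (B114 * B53) = B110)
    (h49 : B38 * (B39 * B97) = 1)
    (h50 : B0 * (B2 * B81) = 1)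
    (h51 : B35 * B90 = B37)
    (h52 : B35 * B89 = B36)
    (h53 : B91 * B38 = B92)
    (h54 : B68 * B109 = B69)
    : B20 * B36 * B43 * B49 * B52 * B58 * B70 * B72 * B74 * B76 * B77 * B79 * B94 * (B4 * (B6 * (B8 * (B11 * (B12 * (B13 * (B16 * (B19 * (B22 * (B24 * (B27 * (B28 * (B30 * (B34 * (B35 * (B37 * (B40 * (B41 * (B45 * (B48 * (B51 * (B55 * (B59 * (B62 * (B63 * (B64 * (B67 * (B69 * (B84 * (B87 * (B88 * (B89 * (B92 * (B96 * (B97 * (B98 * (B100 * (B101 * (B103 * (B106 * (B108 * (B110 * (B111 * (B115 * B117)))))))))))))))))))))))))))))))))))))))))))) =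
      B29 * B42 * B57 * B65 * B71 * B73 * B75 * B78 * B80 * B82 * B101 * (B4 * (B6 * (B8 * (B11 * (B12 * (B13 * (B16 * (B19 * (B22 * (B24 * (B27 * (B28 * (B30 * (B34 * (B35 * (B37 * (B40 * (B41 * (B45 * (B48 * (B51 * (B55 * (B59 * (B62 * (B63 * (B64 * (B67 * (B69 * (B84 * (B87 * (B88 * (B89 * (B92 * (B96 * (B97 * (B98 * (B100 * (B101 * (B103 * (B106 * (B108 * (B110 * (B111 * (B115 * B117)))))))))))))))))))))))))))))))))))))))))))) := by
  linear_combination (B4 * B6 * B8 * B11 * B12 * B13 * B16 * B19 * B20 * B22 * B24 * B27 * B28 * B30 * B34 * B35 * B36 * B37 * B40 * B41 * B43 * B45 * B49 * B51 * B52 * B55 * B58 * B59 * B62 * B64 * B67 * B70 * B72 * B74 * B76 * B77 * B79 * B84 * B87 * B88 * B89 * B92 * B94 * B96 * B97 * B98 * B100 * B101 * B103 * B106 * B108 * B110 * B111 * B115 * B117) * h0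
    - (B4 * B6 * B8 * B11 * B12 * B13 * B16 * B19 * B20 * B22 * B24 * B27 * B28 * B30 * B34 * B35 * B36 * B37 * B40 * B41 * B43 * B45 * B49 * B51 * B52 * B55 * B58 * B59 * B61 * B64 * B67 * B70 * B72 * B74 * B76 * B78 * B79 * B84 * B87 * B88 * B89 * B92 * B94 * B96 * B97 * B98 * B100 * B101 * B103 * B106 * B108 * B110 * B111 * B115 * B117) * h1
    + (B4 * B6 * B8 * B11 * B12 * B13 * B16 * B19 * B20 * B22 * B24 * B27 * B28 * B30 * B34 * B35 * B36 * B37 * B40 * B41 * B43 * B45 * B47 * B49 * B52 * B55 * B58 * B59 * B61 * B63 * B68 * B70 * B72 * B74 * B76 * B78 * B79 * B84 * B87 * B88 * B89 * B92 * B94 * B96 * B97 * B98 * B100 * B101 * B103 * B106 * B108 * B110 * B111 * B115 * B117) * h2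
    - (B4 * B6 * B8 * B11 * B12 * B13 * B16 * B19 * B20 * B22 * B24 * B27 * B28 * B30 * B34 * B35 * B36 * B37 * B40 * B41 * B43 * B45 * B47 * B49 * B52 * B55 * B58 * B59 * B63 * B68 * B70 * B72 * B74 * B78 * B79 * B80 * B84 * B87 * B88 * B89 * B92 * B94 * B96 * B97 * B98 * B100 * B101 * B103 * B106 * B108 * B110 * B111 * B115 * B117) * h3
    + (B4 * B6 * B8 * B11 * B12 * B13 * B16 * B20 * B22 * B24 * B27 * B30 * B34 * B35 * B36 * B37 * B41 * B43 * B45 * B46 * B47 * B49 * B52 * B55 * B56 * B58 * B59 * B60 * B63 * B68 * B70 * B72 * B74 * B78 * B79 * B80 * B84 * B87 * B88 * B89 * B92 * B94 * B96 * B97 * B98 * B100 * B101 * B103 * B106 * B108 * B110 * B111 * B115 * B117) * h4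
    - (B4 * B6 * B8 * B11 * B12 * B13 * B16 * B20 * B22 * B24 * B26 * B30 * B34 * B35 * B36 * B37 * B41 * B43 * B45 * B46 * B48 * B49 * B52 * B55 * B56 * B58 * B59 * B60 * B63 * B68 * B70 * B72 * B74 * B78 * B79 * B80 * B84 * B87 * B88 * B89 * B92 * B94 * B96 * B97 * B98 * B100 * B101 * B103 * B106 * B108 * B110 * B111 * B115 * B117) * h5
    + (B4 * B6 * B8 * B11 * B12 * B13 * B16 * B18 * B20 * B22 * B24 * B26 * B28 * B35 * B36 * B37 * B39 * B41 * B43 * B45 * B46 * B48 * B49 * B52 * B55 * B56 * B58 * B59 * B60 * B63 * B68 * B70 * B72 * B74 * B78 * B79 * B80 * B84 * B88 * B89 * B92 * B94 * B96 * B97 * B98 * B100 * B101 * B103 * B106 * B108 * B110 * B111 * B115 * B117) * h6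
    - (B4 * B6 * B8 * B11 * B12 * B13 * B16 * B18 * B20 * B22 * B24 * B28 * B35 * B36 * B37 * B39 * B41 * B43 * B45 * B48 * B49 * B51 * B52 * B55 * B56 * B58 * B59 * B60 * B63 * B68 * B70 * B72 * B74 * B78 * B79 * B80 * B84 * B88 * B89 * B92 * B94 * B96 * B97 * B98 * B100 * B101 * B103 * B106 * B108 * B110 * B111 * B115 * B117) * h7
    + (B6 * B8 * B11 * B13 * B16 * B17 * B18 * B20 * B20 * B22 * B24 * B25 * B28 * B35 * B36 * B37 * B39 * B41 * B43 * B45 * B48 * B49 * B51 * B52 * B55 * B56 * B58 * B59 * B60 * B63 * B68 * B70 * B72 * B74 * B78 * B79 * B80 * B84 * B88 * B89 * B92 * B94 * B96 * B97 * B98 * B100 * B101 * B103 * B106 * B110 * B111 * B115 * B117) * h8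
    - (B6 * B8 * B10 * B13 * B16 * B17 * B19 * B20 * B20 * B22 * B24 * B25 * B28 * B35 * B36 * B37 * B39 * B41 * B43 * B45 * B48 * B49 * B51 * B52 * B55 * B56 * B58 * B59 * B60 * B63 * B68 * B70 * B72 * B74 * B78 * B79 * B80 * B84 * B88 * B89 * B92 * B94 * B96 * B97 * B98 * B100 * B101 * B103 * B106 * B110 * B111 * B115 * B117) * h9
    - (B3 * B6 * B8 * B10 * B12 * B13 * B16 * B17 * B19 * B20 * B20 * B24 * B25 * B28 * B35 * B36 * B37 * B39 * B41 * B45 * B48 * B49 * B51 * B52 * B55 * B56 * B58 * B59 * B60 * B63 * B68 * B70 * B72 * B74 * B78 * B79 * B80 * B84 * B88 * B89 * B92 * B94 * B96 * B97 * B98 * B100 * B101 * B103 * B106 * B107 * B110 * B111 * B115 * B117) * h10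
    + (B3 * B6 * B8 * B10 * B12 * B13 * B14 * B16 * B17 * B19 * B20 * B20 * B23 * B24 * B25 * B28 * B35 * B35 * B36 * B37 * B39 * B41 * B45 * B48 * B49 * B51 * B52 * B55 * B56 * B58 * B59 * B60 * B63 * B68 * B70 * B72 * B74 * B78 * B79 * B80 * B88 * B89 * B92 * B94 * B96 * B97 * B98 * B100 * B101 * B103 * B107 * B110 * B111 * B115 * B117) * h11
    - (B3 * B6 * B8 * B12 * B13 * B14 * B16 * B19 * B20 * B20 * B23 * B24 * B25 * B28 * B35 * B35 * B36 * B37 * B39 * B41 * B45 * B48 * B49 * B51 * B52 * B55 * B56 * B58 * B59 * B60 * B63 * B68 * B70 * B72 * B74 * B78 * B79 * B80 * B87 * B88 * B89 * B92 * B94 * B96 * B97 * B98 * B100 * B101 * B103 * B107 * B110 * B111 * B115 * B117) * h12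
    + (B3 * B6 * B8 * B9 * B12 * B13 * B14 * B16 * B19 * B20 * B20 * B23 * B24 * B25 * B28 * B35 * B35 * B36 * B37 * B39 * B41 * B45 * B48 * B49 * B51 * B52 * B55 * B56 * B58 * B59 * B60 * B63 * B68 * B70 * B72 * B74 * B78 * B79 * B80 * B87 * B88 * B89 * B92 * B94 * B97 * B98 * B100 * B103 * B105 * B107 * B110 * B111 * B115) * h13
    - (B3 * B6 * B8 * B9 * B12 * B13 * B14 * B16 * B19 * B20 * B20 * B23 * B24 * B25 * B28 * B35 * B35 * B36 * B37 * B39 * B41 * B45 * B48 * B49 * B51 * B52 * B55 * B56 * B58 * B59 * B60 * B63 * B68 * B70 * B72 * B74 * B78 * B79 * B80 * B87 * B88 * B89 * B92 * B94 * B97 * B98 * B99 * B103 * B105 * B108 * B110 * B111 * B115) * h14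
    - (B3 * B8 * B9 * B12 * B13 * B16 * B19 * B20 * B20 * B23 * B24 * B25 * B28 * B35 * B35 * B36 * B37 * B39 * B41 * B45 * B48 * B49 * B51 * B52 * B55 * B56 * B58 * B59 * B60 * B63 * B68 * B70 * B72 * B74 * B78 * B79 * B80 * B87 * B88 * B89 * B92 * B94 * B95 * B97 * B98 * B99 * B101 * B103 * B105 * B108 * B110 * B111 * B115 * B116) * h15
    + (B2 * B3 * B7 * B8 * B9 * B12 * B13 * B16 * B19 * B20 * B20 * B23 * B24 * B25 * B28 * B35 * B35 * B36 * B37 * B39 * B45 * B48 * B49 * B51 * B52 * B56 * B58 * B59 * B60 * B63 * B68 * B72 * B74 * B78 * B79 * B80 * B87 * B88 * B89 * B92 * B93 * B94 * B95 * B97 * B98 * B99 * B101 * B103 * B105 * B108 * B110 * B111 * B115 * B116) * h16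
    + (B2 * B3 * B7 * B8 * B9 * B12 * B13 * B16 * B19 * B20 * B20 * B23 * B24 * B25 * B28 * B35 * B35 * B36 * B37 * B39 * B45 * B48 * B49 * B51 * B52 * B54 * B56 * B58 * B59 * B60 * B63 * B68 * B72 * B73 * B74 * B78 * B79 * B80 * B87 * B88 * B89 * B93 * B94 * B95 * B97 * B99 * B101 * B103 * B105 * B108 * B110 * B111 * B116) * h17
    - (B2 * B3 * B7 * B8 * B9 * B12 * B13 * B16 * B19 * B20 * B20 * B23 * B24 * B25 * B28 * B35 * B35 * B36 * B37 * B39 * B45 * B48 * B49 * B51 * B52 * B54 * B56 * B58 * B59 * B60 * B63 * B68 * B72 * B73 * B74 * B78 * B79 * B80 * B87 * B88 * B89 * B93 * B94 * B95 * B97 * B101 * B103 * B106 * B108 * B110 * B111 * B116) * h18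
    + (B2 * B3 * B7 * B8 * B9 * B12 * B13 * B16 * B19 * B20 * B20 * B23 * B24 * B25 * B28 * B35 * B35 * B36 * B37 * B39 * B48 * B49 * B51 * B52 * B54 * B56 * B60 * B63 * B68 * B72 * B73 * B74 * B78 * B79 * B80 * B87 * B88 * B88 * B89 * B93 * B94 * B95 * B97 * B98 * B101 * B103 * B106 * B108 * B110 * B111 * B114 * B116) * h19
    - (B2 * B3 * B7 * B8 * B9 * B12 * B13 * B16 * B19 * B20 * B20 * B23 * B24 * B25 * B28 * B35 * B35 * B36 * B37 * B39 * B48 * B49 * B51 * B52 * B54 * B56 * B60 * B62 * B63 * B68 * B72 * B73 * B74 * B75 * B78 * B80 * B87 * B88 * B88 * B89 * B93 * B94 * B95 * B97 * B98 * B101 * B103 * B106 * B108 * B110 * B111 * B114 * B116) * h20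
    - (B2 * B3 * B7 * B8 * B9 * B12 * B13 * B16 * B19 * B20 * B20 * B23 * B24 * B25 * B28 * B35 * B35 * B36 * B37 * B39 * B48 * B49 * B50 * B51 * B52 * B54 * B56 * B62 * B63 * B65 * B66 * B68 * B72 * B73 * B75 * B78 * B80 * B87 * B88 * B88 * B89 * B93 * B94 * B95 * B97 * B98 * B101 * B103 * B106 * B108 * B110 * B111 * B114 * B116) * h21
    + (B2 * B3 * B7 * B8 * B9 * B12 * B13 * B19 * B20 * B20 * B25 * B28 * B35 * B35 * B36 * B37 * B39 * B44 * B48 * B49 * B50 * B51 * B52 * B54 * B56 * B57 * B59 * B62 * B63 * B65 * B66 * B68 * B72 * B73 * B75 * B78 * B80 * B87 * B88 * B88 * B89 * B93 * B94 * B95 * B97 * B98 * B101 * B103 * B106 * B108 * B110 * B111 * B114 * B116) * h22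
    - (B2 * B3 * B7 * B8 * B9 * B12 * B13 * B19 * B20 * B20 * B25 * B27 * B28 * B35 * B35 * B36 * B37 * B39 * B44 * B45 * B48 * B49 * B51 * B52 * B54 * B56 * B57 * B59 * B62 * B63 * B65 * B66 * B68 * B72 * B73 * B75 * B78 * B80 * B87 * B88 * B88 * B89 * B93 * B94 * B95 * B97 * B98 * B101 * B103 * B106 * B108 * B110 * B111 * B114 * B116) * h23
    - (B2 * B3 * B7 * B8 * B9 * B12 * B13 * B19 * B20 * B20 * B27 * B28 * B32 * B33 * B35 * B35 * B36 * B37 * B39 * B45 * B48 * B49 * B51 * B52 * B54 * B56 * B57 * B59 * B62 * B63 * B65 * B66 * B68 * B72 * B73 * B75 * B78 * B80 * B86 * B87 * B88 * B88 * B89 * B93 * B94 * B95 * B97 * B98 * B101 * B103 * B106 * B108 * B110 * B111 * B114 * B116) * h24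
    + (B2 * B3 * B9 * B12 * B13 * B15 * B19 * B20 * B20 * B21 * B24 * B27 * B28 * B32 * B33 * B35 * B35 * B36 * B37 * B39 * B45 * B48 * B49 * B51 * B52 * B54 * B56 * B57 * B59 * B62 * B63 * B65 * B66 * B68 * B72 * B73 * B75 * B78 * B80 * B86 * B87 * B88 * B88 * B89 * B93 * B94 * B95 * B97 * B98 * B101 * B106 * B108 * B110 * B111 * B114 * B116) * h25
    - (B2 * B3 * B9 * B11 * B12 * B13 * B15 * B16 * B19 * B20 * B20 * B21 * B24 * B27 * B28 * B32 * B33 * B35 * B35 * B36 * B37 * B39 * B45 * B48 * B49 * B51 * B52 * B54 * B56 * B57 * B59 * B62 * B63 * B65 * B66 * B68 * B72 * B73 * B75 * B78 * B80 * B87 * B88 * B88 * B89 * B93 * B94 * B95 * B97 * B98 * B101 * B106 * B108 * B110 * B111 * B114 * B116) * h26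
    - (B2 * B3 * B9 * B11 * B12 * B13 * B15 * B16 * B19 * B20 * B20 * B21 * B24 * B27 * B28 * B32 * B33 * B35 * B35 * B36 * B37 * B39 * B45 * B48 * B51 * B52 * B54 * B56 * B57 * B59 * B62 * B63 * B65 * B66 * B68 * B72 * B73 * B75 * B78 * B80 * B82 * B83 * B87 * B88 * B88 * B89 * B93 * B94 * B95 * B97 * B98 * B101 * B104 * B106 * B108 * B110 * B111 * B114 * B116) * h27
    + (B2 * B3 * B9 * B11 * B12 * B15 * B16 * B19 * B20 * B24 * B27 * B28 * B29 * B31 * B32 * B33 * B35 * B35 * B36 * B37 * B39 * B45 * B48 * B51 * B52 * B54 * B56 * B57 * B59 * B62 * B63 * B65 * B66 * B68 * B72 * B73 * B75 * B78 * B80 * B82 * B83 * B85 * B87 * B88 * B88 * B89 * B93 * B94 * B95 * B97 * B98 * B101 * B104 * B106 * B108 * B110 * B111 * B114 * B116) * h28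
    - (B2 * B3 * B11 * B12 * B16 * B19 * B20 * B22 * B24 * B27 * B28 * B29 * B31 * B32 * B33 * B35 * B35 * B36 * B37 * B39 * B42 * B45 * B48 * B51 * B52 * B54 * B56 * B57 * B59 * B62 * B63 * B65 * B66 * B68 * B72 * B73 * B75 * B78 * B80 * B82 * B83 * B85 * B87 * B88 * B88 * B89 * B93 * B94 * B95 * B97 * B98 * B101 * B104 * B106 * B108 * B110 * B111 * B114 * B116) * h29
    + (B2 * B3 * B5 * B8 * B11 * B12 * B16 * B19 * B20 * B22 * B24 * B27 * B28 * B29 * B31 * B32 * B33 * B35 * B35 * B36 * B37 * B39 * B42 * B45 * B48 * B51 * B52 * B54 * B56 * B57 * B59 * B62 * B63 * B65 * B66 * B68 * B72 * B73 * B75 * B78 * B80 * B82 * B83 * B85 * B87 * B88 * B88 * B89 * B93 * B94 * B95 * B98 * B101 * B102 * B104 * B106 * B108 * B110 * B114 * B116) * h30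
    - (B2 * B3 * B5 * B8 * B11 * B12 * B16 * B19 * B20 * B22 * B24 * B27 * B28 * B29 * B31 * B32 * B33 * B35 * B35 * B36 * B37 * B39 * B42 * B45 * B48 * B51 * B52 * B56 * B57 * B59 * B62 * B63 * B65 * B66 * B68 * B73 * B75 * B78 * B80 * B82 * B83 * B85 * B87 * B88 * B88 * B89 * B93 * B94 * B95 * B98 * B100 * B101 * B102 * B103 * B104 * B106 * B108 * B110 * B114 * B116) * h31
    - (B2 * B3 * B5 * B8 * B11 * B12 * B16 * B19 * B20 * B22 * B24 * B27 * B28 * B29 * B30 * B31 * B32 * B33 * B35 * B35 * B36 * B37 * B39 * B42 * B45 * B48 * B51 * B52 * B53 * B56 * B57 * B59 * B62 * B63 * B64 * B65 * B66 * B68 * B73 * B75 * B78 * B80 * B82 * B83 * B85 * B87 * B88 * B88 * B89 * B93 * B94 * B95 * B98 * B100 * B101 * B102 * B103 * B106 * B108 * B110 * B114 * B116) * h32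
    - (B2 * B3 * B5 * B8 * B11 * B12 * B16 * B19 * B20 * B22 * B24 * B27 * B28 * B29 * B30 * B31 * B32 * B33 * B35 * B35 * B36 * B37 * B39 * B42 * B45 * B48 * B51 * B52 * B53 * B56 * B57 * B59 * B62 * B63 * B64 * B65 * B66 * B68 * B73 * B75 * B78 * B80 * B82 * B83 * B85 * B87 * B88 * B88 * B89 * B93 * B94 * B95 * B97 * B100 * B101 * B103 * B106 * B108 * B110 * B113 * B114 * B116) * h33
    - (B2 * B3 * B5 * B8 * B11 * B12 * B16 * B19 * B20 * B22 * B24 * B27 * B28 * B29 * B30 * B31 * B32 * B33 * B35 * B35 * B36 * B37 * B39 * B42 * B45 * B48 * B51 * B52 * B53 * B56 * B57 * B59 * B62 * B63 * B64 * B65 * B66 * B68 * B73 * B75 * B78 * B80 * B82 * B83 * B87 * B88 * B88 * B89 * B93 * B94 * B95 * B97 * B97 * B100 * B101 * B103 * B106 * B108 * B109 * B110 * B113 * B114 * B116) * h34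
    + (B2 * B3 * B5 * B8 * B11 * B12 * B16 * B19 * B22 * B24 * B27 * B28 * B29 * B30 * B31 * B32 * B33 * B35 * B35 * B36 * B37 * B39 * B42 * B45 * B48 * B51 * B53 * B57 * B59 * B62 * B63 * B64 * B65 * B66 * B68 * B73 * B75 * B78 * B80 * B81 * B82 * B83 * B87 * B88 * B88 * B89 * B91 * B93 * B94 * B95 * B97 * B97 * B100 * B101 * B103 * B106 * B108 * B109 * B110 * B113 * B114 * B116) * h35
    + (B2 * B3 * B8 * B11 * B12 * B16 * B19 * B22 * B24 * B27 * B28 * B29 * B30 * B31 * B32 * B33 * B35 * B35 * B36 * B37 * B39 * B42 * B45 * B48 * B51 * B53 * B57 * B59 * B62 * B63 * B64 * B65 * B66 * B68 * B71 * B73 * B75 * B78 * B80 * B81 * B82 * B83 * B87 * B88 * B89 * B91 * B93 * B94 * B95 * B97 * B97 * B100 * B101 * B103 * B106 * B108 * B109 * B110 * B113 * B114 * B116) * h36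
    - (B2 * B3 * B6 * B8 * B11 * B12 * B13 * B16 * B19 * B22 * B24 * B27 * B28 * B29 * B30 * B31 * B32 * B33 * B35 * B35 * B36 * B37 * B39 * B42 * B45 * B48 * B51 * B53 * B57 * B59 * B62 * B63 * B64 * B65 * B66 * B68 * B71 * B73 * B75 * B78 * B80 * B81 * B82 * B83 * B87 * B88 * B89 * B91 * B93 * B94 * B95 * B97 * B97 * B100 * B101 * B103 * B106 * B108 * B109 * B113 * B114 * B116) * h37
    + (B2 * B3 * B6 * B8 * B11 * B12 * B13 * B16 * B19 * B22 * B24 * B27 * B28 * B29 * B30 * B31 * B32 * B33 * B35 * B35 * B36 * B37 * B39 * B42 * B45 * B48 * B51 * B53 * B57 * B59 * B62 * B63 * B64 * B65 * B67 * B68 * B71 * B73 * B75 * B78 * B80 * B81 * B82 * B83 * B87 * B88 * B89 * B91 * B93 * B94 * B95 * B97 * B97 * B100 * B101 * B103 * B106 * B108 * B109 * B113 * B114 * B117) * h38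
    - (B2 * B3 * B6 * B8 * B11 * B12 * B13 * B16 * B19 * B22 * B24 * B27 * B28 * B29 * B30 * B31 * B32 * B33 * B35 * B35 * B36 * B37 * B39 * B42 * B45 * B48 * B51 * B53 * B57 * B59 * B62 * B63 * B64 * B65 * B67 * B68 * B71 * B73 * B75 * B78 * B80 * B81 * B82 * B83 * B87 * B89 * B91 * B93 * B94 * B95 * B97 * B97 * B100 * B101 * B103 * B106 * B108 * B109 * B111 * B113 * B114 * B117) * h39
    + (B2 * B3 * B6 * B8 * B11 * B12 * B13 * B16 * B19 * B22 * B24 * B27 * B28 * B29 * B30 * B31 * B32 * B34 * B35 * B35 * B36 * B37 * B39 * B42 * B45 * B48 * B51 * B53 * B57 * B59 * B62 * B63 * B64 * B65 * B67 * B68 * B71 * B73 * B75 * B78 * B80 * B81 * B82 * B83 * B87 * B89 * B91 * B93 * B94 * B96 * B97 * B97 * B100 * B101 * B103 * B106 * B108 * B109 * B111 * B113 * B114 * B117) * h40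
    - (B2 * B3 * B6 * B8 * B11 * B12 * B13 * B16 * B19 * B22 * B24 * B27 * B28 * B29 * B30 * B31 * B32 * B34 * B35 * B35 * B36 * B37 * B39 * B42 * B45 * B48 * B51 * B53 * B57 * B59 * B62 * B63 * B64 * B65 * B67 * B68 * B71 * B73 * B75 * B78 * B80 * B81 * B82 * B83 * B87 * B89 * B89 * B91 * B93 * B94 * B96 * B97 * B97 * B100 * B101 * B103 * B106 * B108 * B109 * B111 * B113 * B114 * B117) * h41
    + (B1 * B2 * B3 * B4 * B6 * B8 * B11 * B12 * B13 * B16 * B19 * B22 * B24 * B27 * B28 * B29 * B30 * B31 * B34 * B35 * B35 * B36 * B37 * B39 * B42 * B45 * B48 * B51 * B53 * B57 * B59 * B62 * B63 * B64 * B65 * B67 * B68 * B71 * B73 * B75 * B78 * B80 * B81 * B82 * B83 * B84 * B87 * B89 * B91 * B93 * B96 * B97 * B97 * B100 * B101 * B103 * B106 * B108 * B109 * B111 * B113 * B114 * B117) * h42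
    + (B1 * B2 * B3 * B4 * B6 * B8 * B11 * B12 * B13 * B16 * B19 * B22 * B24 * B27 * B28 * B29 * B30 * B34 * B35 * B35 * B36 * B37 * B39 * B42 * B45 * B48 * B51 * B53 * B57 * B59 * B62 * B63 * B64 * B65 * B67 * B68 * B71 * B73 * B75 * B78 * B80 * B81 * B82 * B83 * B84 * B87 * B90 * B91 * B96 * B97 * B97 * B100 * B101 * B103 * B106 * B108 * B109 * B111 * B113 * B114 * B117) * h43
    + (B2 * B4 * B6 * B8 * B11 * B12 * B13 * B16 * B19 * B22 * B24 * B27 * B28 * B29 * B30 * B34 * B35 * B35 * B36 * B37 * B39 * B42 * B45 * B48 * B51 * B53 * B57 * B59 * B62 * B63 * B64 * B65 * B67 * B68 * B71 * B73 * B75 * B78 * B80 * B81 * B82 * B84 * B87 * B88 * B90 * B91 * B96 * B97 * B97 * B100 * B101 * B103 * B106 * B108 * B109 * B111 * B113 * B114 * B117) * h44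
    - (B0 * B2 * B4 * B6 * B8 * B11 * B12 * B13 * B16 * B19 * B22 * B24 * B27 * B28 * B29 * B30 * B34 * B35 * B35 * B36 * B39 * B42 * B45 * B48 * B51 * B53 * B57 * B59 * B62 * B63 * B64 * B65 * B67 * B68 * B71 * B73 * B75 * B78 * B80 * B81 * B82 * B84 * B87 * B88 * B90 * B91 * B96 * B97 * B97 * B100 * B101 * B103 * B106 * B108 * B109 * B111 * B113 * B114 * B117) * h45
    - (B0 * B2 * B4 * B6 * B8 * B11 * B12 * B13 * B16 * B19 * B22 * B24 * B27 * B28 * B29 * B30 * B34 * B35 * B35 * B36 * B38 * B39 * B41 * B42 * B45 * B48 * B51 * B53 * B57 * B59 * B62 * B63 * B64 * B65 * B67 * B68 * B71 * B73 * B75 * B78 * B80 * B81 * B82 * B84 * B87 * B88 * B90 * B91 * B96 * B97 * B97 * B100 * B101 * B101 * B103 * B106 * B108 * B109 * B111 * B114 * B117) * h46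
    - (B0 * B2 * B4 * B6 * B8 * B11 * B12 * B13 * B16 * B19 * B22 * B24 * B27 * B28 * B29 * B30 * B34 * B35 * B36 * B38 * B39 * B41 * B42 * B45 * B48 * B51 * B53 * B55 * B57 * B59 * B62 * B63 * B64 * B65 * B67 * B68 * B71 * B73 * B75 * B78 * B80 * B81 * B82 * B84 * B87 * B88 * B90 * B91 * B96 * B97 * B97 * B100 * B101 * B101 * B103 * B106 * B108 * B109 * B109 * B111 * B114 * B115 * B117) * h47
    + (B0 * B2 * B4 * B6 * B8 * B11 * B12 * B13 * B16 * B19 * B22 * B24 * B27 * B28 * B29 * B30 * B34 * B35 * B36 * B38 * B38 * B39 * B40 * B41 * B42 * B45 * B48 * B51 * B55 * B57 * B59 * B62 * B63 * B64 * B65 * B67 * B68 * B71 * B73 * B75 * B78 * B80 * B81 * B82 * B84 * B87 * B88 * B90 * B91 * B96 * B97 * B97 * B98 * B100 * B101 * B101 * B103 * B106 * B108 * B109 * B111 * B115 * B117) * h48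
    + (B0 * B2 * B4 * B6 * B8 * B11 * B12 * B13 * B16 * B19 * B22 * B24 * B27 * B28 * B29 * B30 * B34 * B35 * B36 * B38 * B40 * B41 * B42 * B45 * B48 * B51 * B55 * B57 * B59 * B62 * B63 * B64 * B65 * B67 * B68 * B71 * B73 * B75 * B78 * B80 * B81 * B82 * B84 * B87 * B88 * B90 * B91 * B96 * B97 * B98 * B100 * B101 * B101 * B103 * B106 * B108 * B109 * B110 * B111 * B115 * B117) * h49
    + (B4 * B6 * B8 * B11 * B12 * B13 * B16 * B19 * B22 * B24 * B27 * B28 * B29 * B30 * B34 * B35 * B36 * B38 * B40 * B41 * B42 * B45 * B48 * B51 * B55 * B57 * B59 * B62 * B63 * B64 * B65 * B67 * B68 * B71 * B73 * B75 * B78 * B80 * B82 * B84 * B87 * B88 * B90 * B91 * B96 * B97 * B98 * B100 * B101 * B101 * B103 * B106 * B108 * B109 * B110 * B111 * B115 * B117) * h50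
    + (B4 * B6 * B8 * B11 * B12 * B13 * B16 * B19 * B22 * B24 * B27 * B28 * B29 * B30 * B34 * B36 * B38 * B40 * B41 * B42 * B45 * B48 * B51 * B55 * B57 * B59 * B62 * B63 * B64 * B65 * B67 * B68 * B71 * B73 * B75 * B78 * B80 * B82 * B84 * B87 * B88 * B91 * B96 * B97 * B98 * B100 * B101 * B101 * B103 * B106 * B108 * B109 * B110 * B111 * B115 * B117) * h51
    - (B4 * B6 * B8 * B11 * B12 * B13 * B16 * B19 * B22 * B24 * B27 * B28 * B29 * B30 * B34 * B37 * B38 * B40 * B41 * B42 * B45 * B48 * B51 * B55 * B57 * B59 * B62 * B63 * B64 * B65 * B67 * B68 * B71 * B73 * B75 * B78 * B80 * B82 * B84 * B87 * B88 * B91 * B96 * B97 * B98 * B100 * B101 * B101 * B103 * B106 * B108 * B109 * B110 * B111 * B115 * B117) * h52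
    + (B4 * B6 * B8 * B11 * B12 * B13 * B16 * B19 * B22 * B24 * B27 * B28 * B29 * B30 * B34 * B35 * B37 * B40 * B41 * B42 * B45 * B48 * B51 * B55 * B57 * B59 * B62 * B63 * B64 * B65 * B67 * B68 * B71 * B73 * B75 * B78 * B80 * B82 * B84 * B87 * B88 * B89 * B96 * B97 * B98 * B100 * B101 * B101 * B103 * B106 * B108 * B109 * B110 * B111 * B115 * B117) * h53
    + (B4 * B6 * B8 * B11 * B12 * B13 * B16 * B19 * B22 * B24 * B27 * B28 * B29 * B30 * B34 * B35 * B37 * B40 * B41 * B42 * B45 * B48 * B51 * B55 * B57 * B59 * B62 * B63 * B64 * B65 * B67 * B71 * B73 * B75 * B78 * B80 * B82 * B84 * B87 * B88 * B89 * B92 * B96 * B97 * B98 * B100 * B101 * B101 * B103 * B106 * B108 * B110 * B111 * B115 * B117) * h54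

set_option maxHeartbeats 4000000 in
private theorem key_beta {k G : Type*} [Field k] [Group G] (β : G → G → G → kˣ)
    (hβ : IsNormalized3Cocycle β) (g x y : G) :
    ((β x⁻¹ g⁻¹ g : kˣ) : k) *
      ((β x⁻¹ x (x⁻¹ * (g * x)) : kˣ) : k) *
      ((β (x⁻¹ * (g⁻¹ * x)) (x⁻¹ * (g * x)) x⁻¹ : kˣ) : k) *
      ((β (x⁻¹ * (g * x)) x⁻¹ x : kˣ) : k) *
      ((β y⁻¹ x⁻¹ g⁻¹ : kˣ) : k) *
      ((β y⁻¹ (x⁻¹ * (g⁻¹ * x)) (x⁻¹ * (g * x)) : kˣ) : k) *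
      ((β y⁻¹ y (y⁻¹ * (x⁻¹ * (g * (x * y)))) : kˣ) : k) *
      ((β (y⁻¹ * x⁻¹) g (x * y) : kˣ) : k) *
      ((β (y⁻¹ * (x⁻¹ * (g⁻¹ * (x * y)))) y⁻¹ x⁻¹ : kˣ) : k) *
      ((β (y⁻¹ * (x⁻¹ * (g⁻¹ * (x * y)))) (y⁻¹ * x⁻¹) g : kˣ) : k) *
      ((β (y⁻¹ * (x⁻¹ * (g⁻¹ * (x * y)))) (y⁻¹ * (x⁻¹ * (g * (x * y)))) y⁻¹ : kˣ) : k) *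
      ((β (y⁻¹ * (x⁻¹ * (g * (x * y)))) y⁻¹ y : kˣ) : k) *
      ((β x (x⁻¹ * (g * x)) y : kˣ) : k) =
      ((β x⁻¹ g x : kˣ) : k) *
      ((β (x⁻¹ * (g⁻¹ * x)) x⁻¹ g : kˣ) : k) *
      ((β y⁻¹ (x⁻¹ * (g⁻¹ * x)) x⁻¹ : kˣ) : k) *
      ((β y⁻¹ (x⁻¹ * (g * x)) y : kˣ) : k) *
      ((β (y⁻¹ * x⁻¹) g⁻¹ g : kˣ) : k) *
      ((β (y⁻¹ * x⁻¹) (x * y) (y⁻¹ * (x⁻¹ * (g * (x * y)))) : kˣ) : k) *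
      ((β (y⁻¹ * (x⁻¹ * (g⁻¹ * (x * y)))) y⁻¹ (x⁻¹ * (g * x)) : kˣ) : k) *
      ((β (y⁻¹ * (x⁻¹ * (g⁻¹ * (x * y)))) (y⁻¹ * (x⁻¹ * (g * (x * y)))) (y⁻¹ * x⁻¹) : kˣ) : k) *
      ((β (y⁻¹ * (x⁻¹ * (g * (x * y)))) (y⁻¹ * x⁻¹) (x * y) : kˣ) : k) *
      ((β g x y : kˣ) : k) *
      ((β x y (y⁻¹ * (x⁻¹ * (g * (x * y)))) : kˣ) : k) := by
  have h0 := congrArg (Units.val) (hβ.1 y⁻¹ (x⁻¹ * (g⁻¹ * (x * y))) (y⁻¹ * (x⁻¹ * (g * (x * y)))) (y⁻¹ * x⁻¹))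
  have h1 := congrArg (Units.val) (hβ.1 y⁻¹ (x⁻¹ * (g⁻¹ * (x * y))) (y⁻¹ * (x⁻¹ * (g * (x * y)))) y⁻¹)
  have h2 := congrArg (Units.val) (hβ.1 y⁻¹ (x⁻¹ * (g * (x * y))) (y⁻¹ * x⁻¹) (x * y))
  have h3 := congrArg (Units.val) (hβ.1 y⁻¹ (x⁻¹ * (g⁻¹ * (x * y))) (y⁻¹ * x⁻¹) g)
  have h4 := congrArg (Units.val) (hβ.1 x⁻¹ (g⁻¹ * (x * y)) (y⁻¹ * (x⁻¹ * (g * (x * y)))) (y⁻¹ * x⁻¹))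
  have h5 := congrArg (Units.val) (hβ.1 x⁻¹ (g⁻¹ * (x * y)) (y⁻¹ * (x⁻¹ * (g * (x * y)))) y⁻¹)
  have h6 := congrArg (Units.val) (hβ.1 x⁻¹ (g * (x * y)) (y⁻¹ * x⁻¹) (x * y))
  have h7 := congrArg (Units.val) (hβ.1 x⁻¹ (g⁻¹ * (x * y)) (y⁻¹ * x⁻¹) g)
  have h8 := congrArg (Units.val) (hβ.1 g⁻¹ (x * y) (y⁻¹ * (x⁻¹ * (g * (x * y)))) (y⁻¹ * x⁻¹))
  have h9 := congrArg (Units.val) (hβ.1 g⁻¹ (x * y) (y⁻¹ * (x⁻¹ * (g * (x * y)))) y⁻¹)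
  have h10 := congrArg (Units.val) (hβ.1 x⁻¹ (g⁻¹ * x) (x⁻¹ * (g * x)) x⁻¹)
  have h11 := congrArg (Units.val) (hβ.1 g (x * y) (y⁻¹ * x⁻¹) (x * y))
  have h12 := congrArg (Units.val) (hβ.1 g⁻¹ (x * y) (y⁻¹ * x⁻¹) g)
  have h13 := congrArg (Units.val) (hβ.1 x y (y⁻¹ * (x⁻¹ * (g * (x * y)))) (y⁻¹ * x⁻¹))
  have h14 := congrArg (Units.val) (hβ.1 x y (y⁻¹ * (x⁻¹ * (g * (x * y)))) y⁻¹)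
  have h15 := congrArg (Units.val) (hβ.1 g⁻¹ x (x⁻¹ * (g * x)) x⁻¹)
  have h16 := congrArg (Units.val) (hβ.1 y⁻¹ x⁻¹ (x * y) (y⁻¹ * (x⁻¹ * (g * (x * y)))))
  have h17 := congrArg (Units.val) (hβ.1 x y (y⁻¹ * x⁻¹) (x * y))
  have h18 := congrArg (Units.val) (hβ.1 x y (y⁻¹ * x⁻¹) g)
  have h19 := congrArg (Units.val) (hβ.1 y⁻¹ (x⁻¹ * (g⁻¹ * (x * y))) y⁻¹ (x⁻¹ * (g * x)))
  have h20 := congrArg (Units.val) (hβ.1 y⁻¹ (x⁻¹ * (g * (x * y))) y⁻¹ y)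
  have h21 := congrArg (Units.val) (hβ.1 y⁻¹ (x⁻¹ * (g⁻¹ * (x * y))) y⁻¹ x⁻¹)
  have h22 := congrArg (Units.val) (hβ.1 x⁻¹ (g⁻¹ * (x * y)) y⁻¹ (x⁻¹ * (g * x)))
  have h23 := congrArg (Units.val) (hβ.1 x⁻¹ (g * (x * y)) y⁻¹ y)
  have h24 := congrArg (Units.val) (hβ.1 x⁻¹ (g⁻¹ * (x * y)) y⁻¹ x⁻¹)
  have h25 := congrArg (Units.val) (hβ.1 g⁻¹ (x * y) y⁻¹ (x⁻¹ * (g * x)))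
  have h26 := congrArg (Units.val) (hβ.1 g (x * y) y⁻¹ y)
  have h27 := congrArg (Units.val) (hβ.1 x⁻¹ (g * x) x⁻¹ x)
  have h28 := congrArg (Units.val) (hβ.1 x⁻¹ (g⁻¹ * x) x⁻¹ g)
  have h29 := congrArg (Units.val) (hβ.1 g⁻¹ (x * y) y⁻¹ x⁻¹)
  have h30 := congrArg (Units.val) (hβ.1 x y y⁻¹ (x⁻¹ * (g * x)))
  have h31 := congrArg (Units.val) (hβ.1 y⁻¹ x⁻¹ g (x * y))
  have h32 := congrArg (Units.val) (hβ.1 x y y⁻¹ y)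
  have h33 := congrArg (Units.val) (hβ.1 x y y⁻¹ x⁻¹)
  have h34 := congrArg (Units.val) (hβ.1 g x x⁻¹ x)
  have h35 := congrArg (Units.val) (hβ.1 y⁻¹ x⁻¹ g⁻¹ g)
  have h36 := congrArg (Units.val) (hβ.1 g⁻¹ x x⁻¹ g)
  have h37 := congrArg (Units.val) (hβ.1 y y⁻¹ (x⁻¹ * (g * (x * y))) (y⁻¹ * x⁻¹))
  have h38 := congrArg (Units.val) (hβ.1 y y⁻¹ (x⁻¹ * (g * (x * y))) y⁻¹)
  have h39 := congrArg (Units.val) (hβ.1 x x⁻¹ (g * (x * y)) (y⁻¹ * x⁻¹))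
  have h40 := congrArg (Units.val) (hβ.1 x x⁻¹ (g * (x * y)) y⁻¹)
  have h41 := congrArg (Units.val) (hβ.1 g⁻¹ g (x * y) (y⁻¹ * x⁻¹))
  have h42 := congrArg (Units.val) (hβ.1 x x⁻¹ (g * x) y)
  have h43 := congrArg (Units.val) (hβ.1 x x⁻¹ (g * x) x⁻¹)
  have h44 := congrArg (Units.val) (hβ.1 g⁻¹ g (x * y) y⁻¹)
  have h45 := congrArg (Units.val) (hβ.1 x⁻¹ x y (y⁻¹ * (x⁻¹ * (g * (x * y)))))
  have h46 := congrArg (Units.val) (hβ.1 y y⁻¹ x⁻¹ (x * y))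
  have h47 := congrArg (Units.val) (hβ.1 x⁻¹ x y (y⁻¹ * x⁻¹))
  have h48 := congrArg (Units.val) (hβ.1 y y⁻¹ x⁻¹ g)
  have h49 := congrArg (Units.val) (hβ.1 x⁻¹ x y y⁻¹)
  have h50 := congrArg (Units.val) (hβ.1 g⁻¹ g x x⁻¹)
  have h51 := congrArg (Units.val) (hβ.1 x⁻¹ x x⁻¹ (g * (x * y)))
  have h52 := congrArg (Units.val) (hβ.1 x⁻¹ x x⁻¹ (g * x))
  have h53 := congrArg (Units.val) (hβ.1 x x⁻¹ x y)
  have h54 := congrArg (Units.val) (hβ.1 y⁻¹ y y⁻¹ x⁻¹)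
  simp only [Units.val_mul, hβ.2, mul_assoc, mul_one, one_mul, inv_mul_cancel_left,
    mul_inv_cancel_left, inv_mul_cancel, mul_inv_cancel, Units.val_one] at h0 h1 h2 h3 h4 h5 h6 h7 h8 h9 h10 h11 h12 h13 h14 h15 h16 h17 h18 h19 h20 h21 h22 h23 h24 h25 h26 h27 h28 h29 h30 h31 h32 h33 h34 h35 h36 h37 h38 h39 h40 h41 h42 h43 h44 h45 h46 h47 h48 h49 h50 h51 h52 h53 h54
  have hW : ((β x⁻¹ g⁻¹ g : kˣ) : k) *
      ((β x⁻¹ x (x⁻¹ * (g * x)) : kˣ) : k) *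
      ((β (x⁻¹ * (g⁻¹ * x)) (x⁻¹ * (g * x)) x⁻¹ : kˣ) : k) *
      ((β (x⁻¹ * (g * x)) x⁻¹ x : kˣ) : k) *
      ((β y⁻¹ x⁻¹ g⁻¹ : kˣ) : k) *
      ((β y⁻¹ (x⁻¹ * (g⁻¹ * x)) (x⁻¹ * (g * x)) : kˣ) : k) *
      ((β y⁻¹ y (y⁻¹ * (x⁻¹ * (g * (x * y)))) : kˣ) : k) *
      ((β (y⁻¹ * x⁻¹) g (x * y) : kˣ) : k) *
      ((β (y⁻¹ * (x⁻¹ * (g⁻¹ * (x * y)))) y⁻¹ x⁻¹ : kˣ) : k) *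
      ((β (y⁻¹ * (x⁻¹ * (g⁻¹ * (x * y)))) (y⁻¹ * x⁻¹) g : kˣ) : k) *
      ((β (y⁻¹ * (x⁻¹ * (g⁻¹ * (x * y)))) (y⁻¹ * (x⁻¹ * (g * (x * y)))) y⁻¹ : kˣ) : k) *
      ((β (y⁻¹ * (x⁻¹ * (g * (x * y)))) y⁻¹ y : kˣ) : k) *
      ((β x (x⁻¹ * (g * x)) y : kˣ) : k) *
      (((β g⁻¹ (g * (x * y)) (y⁻¹ * x⁻¹) : kˣ) : k) * (((β g⁻¹ x (x⁻¹ * g) : kˣ) : k) * (((β g⁻¹ (x * y) y⁻¹ : kˣ) : k) * (((β g⁻¹ (x * y) (y⁻¹ * (x⁻¹ * (g * x))) : kˣ) : k) * (((β g⁻¹ (x * y) (y⁻¹ * (x⁻¹ * (g * (x * y)))) : kˣ) : k) * (((β (g⁻¹ * x) x⁻¹ g : kˣ) : k) * (((β (g⁻¹ * (x * y)) y⁻¹ (x⁻¹ * (g * x)) : kˣ) : k) * (((β (g⁻¹ * (x * y)) (y⁻¹ * (x⁻¹ * (g * (x * y)))) (y⁻¹ * x⁻¹) : kˣ) : k) *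 (((β x⁻¹ (g⁻¹ * x) (x⁻¹ * g) : kˣ) : k) * (((β x⁻¹ (g⁻¹ * (x * y)) y⁻¹ : kˣ) : k) * (((β x⁻¹ (g⁻¹ * (x * y)) (y⁻¹ * (x⁻¹ * (g * x))) : kˣ) : k) * (((β x⁻¹ (g⁻¹ * (x * y)) (y⁻¹ * (x⁻¹ * (g * (x * y)))) : kˣ) : k) * (((β x⁻¹ g (x * y) : kˣ) : k) * (((β x⁻¹ (g * (x * y)) (y⁻¹ * x⁻¹) : kˣ) : k) * (((β x⁻¹ x x⁻¹ : kˣ) : k) * (((β x⁻¹ x (x⁻¹ * (g * (x * y))) : kˣ) : k) * (((β x⁻¹ (x * y) (y⁻¹ * x⁻¹) : kˣ) : k) * (((β x⁻¹ (x * y) (y⁻¹ * (x⁻¹ * (g * (x * y)))) : kˣ) : k) * (((β (x⁻¹ * (g⁻¹ * (x * y))) y⁻¹ (x⁻¹ * (g * x)) : kˣ) : k) * (((β (x⁻¹ * (g⁻¹ * (x * y))) (y⁻¹ * (x⁻¹ * (g * (x * y)))) (y⁻¹ * x⁻¹) : kˣ) : k) * (((β (x⁻¹ * (g * (x * y)))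 (y⁻¹ * x⁻¹) (x * y) : kˣ) : k) * (((β y⁻¹ x⁻¹ (x * y) : kˣ) : k) * (((β y⁻¹ (x⁻¹ * (g⁻¹ * (x * y))) y⁻¹ : kˣ) : k) * (((β y⁻¹ (x⁻¹ * (g⁻¹ * (x * y))) (y⁻¹ * (x⁻¹ * (g * x))) : kˣ) : k) * (((β y⁻¹ (x⁻¹ * (g⁻¹ * (x * y))) (y⁻¹ * (x⁻¹ * (g * (x * y)))) : kˣ) : k) * (((β y⁻¹ (x⁻¹ * g) (x * y) : kˣ) : k) * (((β y⁻¹ (x⁻¹ * (g * (x * y))) (y⁻¹ * x⁻¹) : kˣ) : k) * (((β y⁻¹ y (y⁻¹ * x⁻¹) : kˣ) : k) * (((β g (x * y) (y⁻¹ * x⁻¹) : kˣ) : k) * (((β (g * (x * y)) (y⁻¹ * x⁻¹) (x * y) : kˣ) : k) * (((β x x⁻¹ g : kˣ) : k) * (((β x x⁻¹ (g * x) : kˣ) : k) * (((β x x⁻¹ (x * y) : kˣ) : k) * (((β x (x⁻¹ * (g * (x * y))) (y⁻¹ * x⁻¹) : kˣ) : k) * (((β x y y⁻¹ : kˣ)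 : k) * (((β x y (y⁻¹ * x⁻¹) : kˣ) : k) * (((β x y (y⁻¹ * (x⁻¹ * (g * x))) : kˣ) : k) * (((β x y (y⁻¹ * (x⁻¹ * (g * (x * y)))) : kˣ) : k) * (((β (x * y) y⁻¹ (x⁻¹ * (g * x)) : kˣ) : k) * (((β (x * y) (y⁻¹ * x⁻¹) (x * y) : kˣ) : k) * (((β (x * y) (y⁻¹ * (x⁻¹ * (g * (x * y)))) (y⁻¹ * x⁻¹) : kˣ) : k) * (((β y y⁻¹ (x⁻¹ * g) : kˣ) : k) * (((β y y⁻¹ (x⁻¹ * (g * x)) : kˣ) : k) * (((β y (y⁻¹ * x⁻¹) (x * y) : kˣ) : k) * ((β y (y⁻¹ * (x⁻¹ * (g * (x * y)))) (y⁻¹ * x⁻¹) : kˣ) : k))))))))))))))))))))))))))))))))))))))))))))) =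
      ((β x⁻¹ g x : kˣ) : k) *
      ((β (x⁻¹ * (g⁻¹ * x)) x⁻¹ g : kˣ) : k) *
      ((β y⁻¹ (x⁻¹ * (g⁻¹ * x)) x⁻¹ : kˣ) : k) *
      ((β y⁻¹ (x⁻¹ * (g * x)) y : kˣ) : k) *
      ((β (y⁻¹ * x⁻¹) g⁻¹ g : kˣ) : k) *
      ((β (y⁻¹ * x⁻¹) (x * y) (y⁻¹ * (x⁻¹ * (g * (x * y)))) : kˣ) : k) *
      ((β (y⁻¹ * (x⁻¹ * (g⁻¹ * (x * y)))) y⁻¹ (x⁻¹ * (g * x)) : kˣ) : k) *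
      ((β (y⁻¹ * (x⁻¹ * (g⁻¹ * (x * y)))) (y⁻¹ * (x⁻¹ * (g * (x * y)))) (y⁻¹ * x⁻¹) : kˣ) : k) *
      ((β (y⁻¹ * (x⁻¹ * (g * (x * y)))) (y⁻¹ * x⁻¹) (x * y) : kˣ) : k) *
      ((β g x y : kˣ) : k) *
      ((β x y (y⁻¹ * (x⁻¹ * (g * (x * y)))) : kˣ) : k) *
      (((β g⁻¹ (g * (x * y)) (y⁻¹ * x⁻¹) : kˣ) : k) * (((β g⁻¹ x (x⁻¹ * g) : kˣ) : k) * (((β g⁻¹ (x * y) y⁻¹ : kˣ) : k) * (((β g⁻¹ (x * y) (y⁻¹ * (x⁻¹ * (g * x))) : kˣ) : k) * (((β g⁻¹ (x * y) (y⁻¹ * (x⁻¹ * (g * (x * y)))) : kˣ) : k) * (((β (g⁻¹ * x) x⁻¹ g : kˣ) : k) * (((β (g⁻¹ * (x * y)) y⁻¹ (x⁻¹ * (g * x)) : kˣ) : k) * (((β (g⁻¹ * (x * y)) (y⁻¹ * (x⁻¹ * (g * (x * y)))) (y⁻¹ * x⁻¹) : kˣ) : k) * (((β x⁻¹ (g⁻¹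 * x) (x⁻¹ * g) : kˣ) : k) * (((β x⁻¹ (g⁻¹ * (x * y)) y⁻¹ : kˣ) : k) * (((β x⁻¹ (g⁻¹ * (x * y)) (y⁻¹ * (x⁻¹ * (g * x))) : kˣ) : k) * (((β x⁻¹ (g⁻¹ * (x * y)) (y⁻¹ * (x⁻¹ * (g * (x * y)))) : kˣ) : k) * (((β x⁻¹ g (x * y) : kˣ) : k) * (((β x⁻¹ (g * (x * y)) (y⁻¹ * x⁻¹) : kˣ) : k) * (((β x⁻¹ x x⁻¹ : kˣ) : k) * (((β x⁻¹ x (x⁻¹ * (g * (x * y))) : kˣ) : k) * (((β x⁻¹ (x * y) (y⁻¹ * x⁻¹) : kˣ) : k) * (((β x⁻¹ (x * y) (y⁻¹ * (x⁻¹ * (g * (x * y)))) : kˣ) : k) * (((β (x⁻¹ * (g⁻¹ * (x * y))) y⁻¹ (x⁻¹ * (g * x)) : kˣ) : k) * (((β (x⁻¹ * (g⁻¹ * (x * y))) (y⁻¹ * (x⁻¹ * (g * (x * y)))) (y⁻¹ * x⁻¹) : kˣ) : k) * (((β (x⁻¹ * (g * (x * y))) (y⁻¹ * x⁻¹) (x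 * y) : kˣ) : k) * (((β y⁻¹ x⁻¹ (x * y) : kˣ) : k) * (((β y⁻¹ (x⁻¹ * (g⁻¹ * (x * y))) y⁻¹ : kˣ) : k) * (((β y⁻¹ (x⁻¹ * (g⁻¹ * (x * y))) (y⁻¹ * (x⁻¹ * (g * x))) : kˣ) : k) * (((β y⁻¹ (x⁻¹ * (g⁻¹ * (x * y))) (y⁻¹ * (x⁻¹ * (g * (x * y)))) : kˣ) : k) * (((β y⁻¹ (x⁻¹ * g) (x * y) : kˣ) : k) * (((β y⁻¹ (x⁻¹ * (g * (x * y))) (y⁻¹ * x⁻¹) : kˣ) : k) * (((β y⁻¹ y (y⁻¹ * x⁻¹) : kˣ) : k) * (((β g (x * y) (y⁻¹ * x⁻¹) : kˣ) : k) * (((β (g * (x * y)) (y⁻¹ * x⁻¹) (x * y) : kˣ) : k) * (((β x x⁻¹ g : kˣ) : k) * (((β x x⁻¹ (g * x) : kˣ) : k) * (((β x x⁻¹ (x * y) : kˣ) : k) * (((β x (x⁻¹ * (g * (x * y))) (y⁻¹ * x⁻¹) : kˣ) : k) * (((β x y y⁻¹ : kˣ) : k) * (((β x y (y⁻¹ *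 x⁻¹) : kˣ) : k) * (((β x y (y⁻¹ * (x⁻¹ * (g * x))) : kˣ) : k) * (((β x y (y⁻¹ * (x⁻¹ * (g * (x * y)))) : kˣ) : k) * (((β (x * y) y⁻¹ (x⁻¹ * (g * x)) : kˣ) : k) * (((β (x * y) (y⁻¹ * x⁻¹) (x * y) : kˣ) : k) * (((β (x * y) (y⁻¹ * (x⁻¹ * (g * (x * y)))) (y⁻¹ * x⁻¹) : kˣ) : k) * (((β y y⁻¹ (x⁻¹ * g) : kˣ) : k) * (((β y y⁻¹ (x⁻¹ * (g * x)) : kˣ) : k) * (((β y (y⁻¹ * x⁻¹) (x * y) : kˣ) : k) * ((β y (y⁻¹ * (x⁻¹ * (g * (x * y)))) (y⁻¹ * x⁻¹) : kˣ) : k))))))))))))))))))))))))))))))))))))))))))))) := key_abstract h0 h1 h2 h3 h4 h5 h6 h7 h8 h9 h10 h11 h12 h13 h14 h15 h16 h17 h18 h19 h20 h21 h22 h23 h24 h25 h26 h27 h28 h29 h30 h31 h32 h33 h34 h35 h36 h37 h38 h39 h40 h41 h42 h43 h44 h45 h46 h47 h48 h49 h50 h51 h52 h53 h54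
  have hWne : (((β g⁻¹ (g * (x * y)) (y⁻¹ * x⁻¹) : kˣ) : k) * (((β g⁻¹ x (x⁻¹ * g) : kˣ) : k) * (((β g⁻¹ (x * y) y⁻¹ : kˣ) : k) * (((β g⁻¹ (x * y) (y⁻¹ * (x⁻¹ * (g * x))) : kˣ) : k) * (((β g⁻¹ (x * y) (y⁻¹ * (x⁻¹ * (g * (x * y)))) : kˣ) : k) * (((β (g⁻¹ * x) x⁻¹ g : kˣ) : k) * (((β (g⁻¹ * (x * y)) y⁻¹ (x⁻¹ * (g * x)) : kˣ) : k) * (((β (g⁻¹ * (x * y)) (y⁻¹ * (x⁻¹ * (g * (x * y)))) (y⁻¹ * x⁻¹) : kˣ) : k) * (((β x⁻¹ (g⁻¹ * x) (x⁻¹ * g) : kˣ) : k) * (((β x⁻¹ (g⁻¹ * (x * y)) y⁻¹ : kˣ) : k) * (((β x⁻¹ (g⁻¹ * (x * y)) (y⁻¹ * (x⁻¹ * (g * x))) : kˣ) : k) * (((β x⁻¹ (g⁻¹ * (x * y)) (y⁻¹ * (x⁻¹ * (g * (x * y)))) : kˣ) : k) * (((β x⁻¹ g (x * y) : kˣ)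 : k) * (((β x⁻¹ (g * (x * y)) (y⁻¹ * x⁻¹) : kˣ) : k) * (((β x⁻¹ x x⁻¹ : kˣ) : k) * (((β x⁻¹ x (x⁻¹ * (g * (x * y))) : kˣ) : k) * (((β x⁻¹ (x * y) (y⁻¹ * x⁻¹) : kˣ) : k) * (((β x⁻¹ (x * y) (y⁻¹ * (x⁻¹ * (g * (x * y)))) : kˣ) : k) * (((β (x⁻¹ * (g⁻¹ * (x * y))) y⁻¹ (x⁻¹ * (g * x)) : kˣ) : k) * (((β (x⁻¹ * (g⁻¹ * (x * y))) (y⁻¹ * (x⁻¹ * (g * (x * y)))) (y⁻¹ * x⁻¹) : kˣ) : k) * (((β (x⁻¹ * (g * (x * y))) (y⁻¹ * x⁻¹) (x * y) : kˣ) : k) * (((β y⁻¹ x⁻¹ (x * y) : kˣ) : k) * (((β y⁻¹ (x⁻¹ * (g⁻¹ * (x * y))) y⁻¹ : kˣ) : k) * (((β y⁻¹ (x⁻¹ * (g⁻¹ * (x * y))) (y⁻¹ * (x⁻¹ * (g * x))) : kˣ) : k) * (((β y⁻¹ (x⁻¹ * (g⁻¹ * (x * y))) (y⁻¹ * (x⁻¹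 * (g * (x * y)))) : kˣ) : k) * (((β y⁻¹ (x⁻¹ * g) (x * y) : kˣ) : k) * (((β y⁻¹ (x⁻¹ * (g * (x * y))) (y⁻¹ * x⁻¹) : kˣ) : k) * (((β y⁻¹ y (y⁻¹ * x⁻¹) : kˣ) : k) * (((β g (x * y) (y⁻¹ * x⁻¹) : kˣ) : k) * (((β (g * (x * y)) (y⁻¹ * x⁻¹) (x * y) : kˣ) : k) * (((β x x⁻¹ g : kˣ) : k) * (((β x x⁻¹ (g * x) : kˣ) : k) * (((β x x⁻¹ (x * y) : kˣ) : k) * (((β x (x⁻¹ * (g * (x * y))) (y⁻¹ * x⁻¹) : kˣ) : k) * (((β x y y⁻¹ : kˣ) : k) * (((β x y (y⁻¹ * x⁻¹) : kˣ) : k) * (((β x y (y⁻¹ * (x⁻¹ * (g * x))) : kˣ) : k) * (((β x y (y⁻¹ * (x⁻¹ * (g * (x * y)))) : kˣ) : k) * (((β (x * y) y⁻¹ (x⁻¹ * (g * x)) : kˣ) : k) * (((β (x * y) (y⁻¹ * x⁻¹) (x * y) : kˣ) : k) * (((β (x * y) (y⁻¹ * (x⁻¹ * (g * (x * y)))) (y⁻¹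 * x⁻¹) : kˣ) : k) * (((β y y⁻¹ (x⁻¹ * g) : kˣ) : k) * (((β y y⁻¹ (x⁻¹ * (g * x)) : kˣ) : k) * (((β y (y⁻¹ * x⁻¹) (x * y) : kˣ) : k) * ((β y (y⁻¹ * (x⁻¹ * (g * (x * y)))) (y⁻¹ * x⁻¹) : kˣ) : k))))))))))))))))))))))))))))))))))))))))))))) ≠ 0 := by
    simp only [← Units.val_mul]; exact Units.ne_zero _
  exact mul_right_cancel₀ hWne hW

set_option maxHeartbeats 1000000 in
private theorem star {k G : Type*} [Field k] [Group G] (β : G → G → G → kˣ)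
    (hβ : IsNormalized3Cocycle β) (g x y : G) :
    ddTheta β (x⁻¹ * (g * x)) x⁻¹ x * ddGamma β x⁻¹ (x⁻¹ * (g⁻¹ * x)) (x⁻¹ * (g * x)) *
      (ddTheta β (y⁻¹ * (x⁻¹ * (g * (x * y)))) y⁻¹ y *
        ddGamma β y⁻¹ (y⁻¹ * (x⁻¹ * (g⁻¹ * (x * y)))) (y⁻¹ * (x⁻¹ * (g * (x * y))))) *
      ddTheta β (y⁻¹ * (x⁻¹ * (g⁻¹ * (x * y)))) y⁻¹ x⁻¹ =
    ddTheta β (y⁻¹ * (x⁻¹ * (g * (x * y)))) (y⁻¹ * x⁻¹) (x * y) *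
      ddGamma β (y⁻¹ * x⁻¹) (y⁻¹ * (x⁻¹ * (g⁻¹ * (x * y)))) (y⁻¹ * (x⁻¹ * (g * (x * y)))) *
      ddTheta β g x y := by
  rw [Units.ext_iff]
  simp only [ddTheta, ddGamma, Units.val_mul, Units.val_div_eq_div_val, mul_assoc, mul_inv_rev,
    inv_inv, one_mul, mul_one, inv_mul_cancel_left, mul_inv_cancel_left, inv_mul_cancel,
    mul_inv_cancel, hβ.2, Units.val_one]
  field_simp
  simp only [div_eq_mul_inv, one_mul, mul_assoc, mul_inv_rev, inv_inv, mul_one,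
    inv_mul_cancel_left, mul_inv_cancel_left, inv_mul_cancel, mul_inv_cancel, inv_one]
  linear_combination key_beta β hβ g x y

set_option maxHeartbeats 1000000 in
/-- the antipode `S` of `D^β(k[G])` is a unital algebra
anti-homomorphism. -/
theorem stmt18 {k G : Type*} [Field k] [Group G] [Fintype G] [DecidableEq G]
    (β : G → G → G → kˣ) (hβ : IsNormalized3Cocycle β) :
    (∀ g x : G, ddAntipode β (ddBasis g x) =
      (((ddTheta β g⁻¹ x x⁻¹ * ddGamma β x g g⁻¹)⁻¹ : kˣ) : k) •
        ddBasis (x⁻¹ * g⁻¹ * x) x⁻¹) ∧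
    (∀ a b : DD k G, ddAntipode β (a + b) = ddAntipode β a + ddAntipode β b) ∧
    (∀ (c : k) (a : DD k G), ddAntipode β (c • a) = c • ddAntipode β a) ∧
    (∀ a b : DD k G,
      ddAntipode β (ddMul β a b) = ddMul β (ddAntipode β b) (ddAntipode β a)) ∧
    ddAntipode β (ddOne k G) = ddOne k G := by
  refine ⟨?_, ?_, ?_, ?_, ?_⟩
  · intro g x
    funext p
    obtain ⟨p1, p2⟩ := p
    simp only [ddAntipode, ddBasis, Pi.smul_apply, smul_eq_mul]
    by_cases hp : (p1, p2) = (x⁻¹ * g⁻¹ * x, x⁻¹)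
    · rw [Prod.mk.injEq] at hp
      obtain ⟨h1, h2⟩ := hp
      subst h1; subst h2
      simp [mul_assoc, mul_inv_rev, inv_inv, one_mul, mul_one, inv_mul_cancel_left,
        mul_inv_cancel_left, inv_mul_cancel, mul_inv_cancel]
    · have hL : ¬((p2⁻¹ * p1⁻¹ * p2, p2⁻¹) = (g, x)) := by
        intro h
        apply hp
        rw [Prod.mk.injEq] at h ⊢
        obtain ⟨h1, h2⟩ := h
        have h2' : p2 = x⁻¹ := by rw [← h2, inv_inv]
        subst h2'
        refine ⟨?_, rfl⟩
        rw [← h1]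
        group
      rw [if_neg hL, if_neg hp, mul_zero, mul_zero]
  · intro a b
    funext p
    simp only [ddAntipode, Pi.add_apply]
    ring
  · intro c a
    funext p
    simp only [ddAntipode, Pi.smul_apply, smul_eq_mul]
    ring
  · intro a b
    funext p
    obtain ⟨P1, P2⟩ := p
    simp only [ddAntipode, ddMul, Finset.mul_sum]
    refine (Fintype.sum_equiv (Equiv.mulLeft P2⁻¹) _ _ ?_).symm
    intro v
    simp only [Equiv.coe_mulLeft, mul_assoc, mul_inv_rev, inv_inv, one_mul, mul_one,
      inv_mul_cancel_left, mul_inv_cancel_left, inv_mul_cancel, mul_inv_cancel]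
    have hs := congrArg (Units.val) (star β hβ P1 v (v⁻¹ * P2))
    simp only [Units.val_mul, mul_assoc, mul_inv_rev, inv_inv, one_mul, mul_one,
      inv_mul_cancel_left, mul_inv_cancel_left, inv_mul_cancel, mul_inv_cancel] at hs
    simp only [Units.val_mul, Units.val_inv_eq_inv_val]
    field_simp
    linear_combination -(a (P2⁻¹ * (P1⁻¹ * P2), P2⁻¹ * v) * b (v⁻¹ * (P1⁻¹ * v), v⁻¹)) * hs
  · funext p
    obtain ⟨p1, p2⟩ := p
    have hone : ∀ q : G × G, ddOne k G q = if q.2 = 1 then 1 else 0 := by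
      rintro ⟨q1, q2⟩
      simp only [ddOne, ddBasis, Finset.sum_apply, Prod.mk.injEq]
      by_cases h : q2 = 1
      · simp [h]
      · simp [h]
    show ddAntipode β (ddOne k G) (p1, p2) = ddOne k G (p1, p2)
    simp only [ddAntipode]
    rw [hone, hone]
    by_cases h : p2 = 1
    · subst h
      have h1 : ddTheta β ((1 : G)⁻¹ * p1 * 1) 1⁻¹ 1 = 1 := by
        simp [ddTheta, hβ.2]
      have h2 : ddGamma β ((1 : G)⁻¹ : G) ((1 : G)⁻¹ * p1⁻¹ * 1) ((1 : G)⁻¹ * p1 * 1) = 1 := by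
        simp [ddGamma, hβ.2]
      rw [h1, h2]
      simp
    · have h' : p2⁻¹ ≠ 1 := by simpa [inv_eq_one] using h
      rw [if_neg h', if_neg h, mul_zero]


end StringyOrbifold
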